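/- Let G be a (2K_2, K_3+K_1)-free graph with a distinguished induced 5-cycle structure: vertex sets A_1,...,A_5 as before (A_i complete to A_{i±1}, anticomplete to A_{i±2}, with v_i ∈ A_i), and for i mod 5 let B_i be the set of vertices outside A that have a neighbor in each of A_i, A_{i-2}, A_{i+2} and are anticomplete to A_{i-1} ∪ A_{i+1}. Then every vertex of B_i is complete to A_i. -/
import Mathlib


open SimpleGraph

/-- `K_3 + K_1`: a triangle plus an isolated vertex. -/
def K3K1 : SimpleGraph (Fin 4) :=
  SimpleGraph.fromEdgeSet {s(0, 1), s(0, 2), s(1, 2)}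

/-- In a K_3+K_1-free graph with a 5-cycle blow-up structure `A 0, …, A 4`
(each `A i` complete to `A (i±1)` and anticomplete to `A (i±2)`), every vertex `x`
outside `A` that has a neighbor in each of `A i`, `A (i+2)`, `A (i-2)` and is
anticomplete to `A (i+1) ∪ A (i-1)` is complete to `A i`. -/
theorem stmt18 {V : Type*} (G : SimpleGraph V)
    (hfree : IsEmpty (K3K1 ↪g G))
    (A : Fin 5 → Set V)
    (hcomp : ∀ i : Fin 5, ∀ a ∈ A i, ∀ b ∈ A (i + 1), G.Adj a b)
    (hanti : ∀ i : Fin 5, ∀ a ∈ A i, ∀ b ∈ A (i + 2), ¬ G.Adj a b)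
    (i : Fin 5) (x : V) (hx : ∀ j, x ∉ A j)
    (hxi : ∃ a ∈ A i, G.Adj x a)
    (hxp : ∃ a ∈ A (i + 2), G.Adj x a)
    (hxm : ∃ a ∈ A (i - 2), G.Adj x a)
    (hxanti : ∀ a, a ∈ A (i + 1) ∪ A (i - 1) → ¬ G.Adj x a) :
    ∀ a ∈ A i, G.Adj x a := by
  intro a ha
  by_contra hax
  obtain ⟨a', ha', hxa'⟩ := hxp
  obtain ⟨a'', ha'', hxa''⟩ := hxm
  have key : (i - 2 : Fin 5) = i + 2 + 1 := by fin_cases i <;> rfl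
  have h1 : G.Adj a' a'' := hcomp (i + 2) a' ha' a'' (by rw [← key]; exact ha'')
  have h2 : ¬ G.Adj a a' := hanti i a ha a' ha'
  have h3 : ¬ G.Adj a'' a := hanti (i - 2) a'' ha'' a (by
    have : (i - 2 : Fin 5) + 2 = i := by fin_cases i <;> rfl
    rw [this]; exact ha)
  -- build embedding of K3K1
  have hxA' : x ≠ a' := fun h => hx _ (h ▸ ha')
  have hxA'' : x ≠ a'' := fun h => hx _ (h ▸ ha'')
  have hxA : x ≠ a := fun h => hx _ (h ▸ ha)
  have ha'a'' : a' ≠ a'' := h1.ne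
  have haa' : a ≠ a' := fun h => hax (h ▸ hxa')
  have haa'' : a ≠ a'' := fun h => hax (h ▸ hxa'')
  let f : Fin 4 → V := ![x, a', a'', a]
  have hinj : Function.Injective f := by
    intro u v huv
    fin_cases u <;> fin_cases v <;> simp_all [f] <;>
      first
        | rfl
        | exact absurd huv.symm (by assumption)
        | exact absurd huv (by assumption)
  have hadj : ∀ u v : Fin 4, K3K1.Adj u v ↔ G.Adj (f u) (f v) := by
    intro u v
    fin_cases u <;> fin_cases v <;>
      simp [f, K3K1, G.adj_comm, hxa', hxa'', h1, hax, h2, h3] <;>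
      first
        | exact hxa'.symm
        | exact hxa''.symm
        | exact h1.symm
        | exact fun h => h2 h.symm
        | exact fun h => h3 h.symm
        | exact fun h => hax h.symm
        | exact G.irrefl
  exact hfree.false ⟨⟨f, hinj⟩, fun {u v} => (hadj u v).symm⟩
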